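/- The Teia potential update condition holds for a cryptic move: let (M,d) be a metric space, k ≥ 1, let s_1,…,s_k and a_1,…,a_k be points of M with s_j = a_j for every j ≠ 1, and let E_1,…,E_k ∈ ℝ. Let â_1 ∈ M be arbitrary and define â by â_1 at index 1 and â_j = a_j for j ≠ 1. Then Φ(s,â,E) − Φ(s,a,E) ≤ k·d(a_1,â_1). -/

import Mathlib

/-- The isolation index `α(p; q, r) = (d(p,q) + d(p,r) − d(q,r)) / 2`. -/
noncomputable def alpha {M : Type*} [MetricSpace M] (p q r : M) : ℝ :=
  (dist p q + dist p r - dist q r) / 2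

/-- The Teia potential `Φ(s, a, E)`:
`Σ_{i<j} d(s_i,s_j) + k·Σ_i d(s_i,a_i) + 2·Σ_i (e_max − E_i)`,
where `ε^i = Σ_j α(s_j; a_j, s_i)`, `e_i = E_i − ε^i`, and
`e_max = max_i e_i`. -/
noncomputable def teiaPhi {M : Type*} [MetricSpace M] {k : ℕ}
    (s a : Fin k → M) (E : Fin k → ℝ) : ℝ :=
  (∑ i : Fin k, ∑ j ∈ Finset.Ioi i, dist (s i) (s j))
    + k * ∑ i : Fin k, dist (s i) (a i)
    + 2 * ∑ i : Fin k,
        ((⨆ j : Fin k, (E j - ∑ l : Fin k, alpha (s l) (a l) (s j))) - E i)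

/-- Update condition for a cryptic move: if the adversary relocates its (unique)
open server `a_1` to a new point `anew`, the Teia potential increases by at most
`k` times the adversary's cost. -/
theorem teiaPhi_cryptic_move {M : Type*} [MetricSpace M] {k : ℕ} (hk : 1 ≤ k)
    (s a : Fin k → M) (E : Fin k → ℝ)
    (h : ∀ j : Fin k, j ≠ ⟨0, hk⟩ → s j = a j) (anew : M) :
    teiaPhi s (Function.update a ⟨0, hk⟩ anew) E - teiaPhi s a E
      ≤ k * dist (a ⟨0, hk⟩) anew := by
  have : Nonempty (Fin k) := ⟨⟨0, hk⟩⟩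
  set i0 : Fin k := ⟨0, hk⟩ with hi0
  set b := Function.update a i0 anew with hb
  have hb0 : b i0 = anew := Function.update_self _ _ _
  have hbne : ∀ j : Fin k, j ≠ i0 → b j = a j := fun j hj =>
    Function.update_of_ne hj _ _
  -- zero distances off i0
  have hzero : ∀ j : Fin k, j ≠ i0 → dist (s j) (a j) = 0 := fun j hj => by
    rw [h j hj, dist_self]
  have hS : ∑ i : Fin k, dist (s i) (a i) = dist (s i0) (a i0) :=
    Finset.sum_eq_single i0 (fun j _ hj => hzero j hj) (by simp)
  have hS' : ∑ i : Fin k, dist (s i) (b i) = dist (s i0) anew := by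
    rw [← hb0]
    exact Finset.sum_eq_single i0
      (fun j _ hj => by rw [hbne j hj]; exact hzero j hj) (by simp)
  -- alpha sums collapse
  have hE : ∀ i : Fin k, ∑ l : Fin k, alpha (s l) (a l) (s i)
      = alpha (s i0) (a i0) (s i) := fun i =>
    Finset.sum_eq_single i0
      (fun j _ hj => by simp [alpha, ← h j hj]) (by simp)
  have hE' : ∀ i : Fin k, ∑ l : Fin k, alpha (s l) (b l) (s i)
      = alpha (s i0) anew (s i) := fun i => by
    rw [← hb0]
    exact Finset.sum_eq_single i0
      (fun j _ hj => by rw [hbne j hj]; simp [alpha, ← h j hj]) (by simp)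
  set D := dist (a i0) anew with hD
  set c := (dist (s i0) (a i0) - dist (s i0) anew + D) / 2 with hc
  have hpt : ∀ i : Fin k,
      E i - alpha (s i0) anew (s i) ≤ (E i - alpha (s i0) (a i0) (s i)) + c := by
    intro i
    have ht : dist anew (s i) ≤ D + dist (a i0) (s i) := by
      rw [hD, dist_comm (a i0) anew]
      exact dist_triangle anew (a i0) (s i)
    simp only [alpha, hc]
    linarith
  set supOld := ⨆ j : Fin k, (E j - ∑ l : Fin k, alpha (s l) (a l) (s j)) with hso
  set supNew := ⨆ j : Fin k, (E j - ∑ l : Fin k, alpha (s l) (b l) (s j)) with hsn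
  have hbdd : BddAbove (Set.range fun j : Fin k =>
      E j - ∑ l : Fin k, alpha (s l) (a l) (s j)) := Finite.bddAbove_range _
  have hsup : supNew ≤ supOld + c := by
    rw [hsn]
    apply ciSup_le
    intro i
    calc E i - ∑ l : Fin k, alpha (s l) (b l) (s i)
        = E i - alpha (s i0) anew (s i) := by rw [hE' i]
      _ ≤ (E i - alpha (s i0) (a i0) (s i)) + c := hpt i
      _ = (E i - ∑ l : Fin k, alpha (s l) (a l) (s i)) + c := by rw [hE i]
      _ ≤ supOld + c := add_le_add_left (le_ciSup hbdd i) c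
  have hk' : (1:ℝ) ≤ (k:ℝ) := by exact_mod_cast hk
  have htri : dist (s i0) anew ≤ dist (s i0) (a i0) + D := dist_triangle _ _ _
  have hsum3 : ∀ sup : ℝ, ∑ i : Fin k, (sup - E i) = k * sup - ∑ i : Fin k, E i := by
    intro sup
    rw [Finset.sum_sub_distrib, Finset.sum_const, Finset.card_univ, Fintype.card_fin,
      nsmul_eq_mul]
  simp only [teiaPhi, ← hso, ← hsn, hsum3, hS, hS']
  have hDnn : (0:ℝ) ≤ D := dist_nonneg
  nlinarith [hsup, mul_le_mul_of_nonneg_left hsup (by linarith : (0:ℝ) ≤ (k:ℝ))]
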